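/- arXiv:2103.11370 — 2 statements merged into one kernel-verified Lean document; each statement's English description precedes it below -/
import Mathlib

section
/- Let T ≥ 3, λ > 0, G > 0, c ≥ 0, let w_1 ∈ 𝒟 and g_1, …, g_{T−1} ∈ ℝ^d with ‖g_t‖ ≤ G, and define iterates by w_{t+1} = Π(w_t − η_t·g_t) with time-varying step sizes η_t = 1/(λ(t + c)). Then the total continuous switching cost satisfies Σ_{t=2}^T ‖w_t − w_{t−1}‖ ≤ (2G/λ)·log(T/(1 + c) + 1). -/
open scoped InnerProductSpace BigOperators

/-- Euclidean projection onto the ball `{w : ‖w‖ ≤ D/2}` in `ℝ^d`. -/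
noncomputable def ballProj (d : ℕ) (D : ℝ) (p : EuclideanSpace ℝ (Fin d)) :
    EuclideanSpace ℝ (Fin d) :=
  if ‖p‖ ≤ D / 2 then p else (D / (2 * ‖p‖)) • p

lemma ballProj_mem (d : ℕ) (D : ℝ) (hD : 0 ≤ D) (p : EuclideanSpace ℝ (Fin d)) :
    ‖ballProj d D p‖ ≤ D / 2 := by
  unfold ballProj
  split_ifs with h
  · exact h
  · push_neg at h
    have hp : 0 < ‖p‖ := lt_of_le_of_lt (by linarith) h
    rw [norm_smul, Real.norm_eq_abs, abs_of_nonneg (by positivity)]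
    rw [div_mul_eq_mul_div, mul_comm 2 ‖p‖, ← div_div, mul_div_assoc,
      div_self (ne_of_gt hp), mul_one]

lemma ballProj_dist (d : ℕ) (D : ℝ) (p q : EuclideanSpace ℝ (Fin d))
    (hq : ‖q‖ ≤ D / 2) : ‖ballProj d D p - q‖ ≤ ‖p - q‖ := by
  unfold ballProj
  split_ifs with h
  · exact le_refl _
  · push_neg at h
    have hD2 : (0:ℝ) ≤ D / 2 := (norm_nonneg q).trans hq
    have hp : 0 < ‖p‖ := lt_of_le_of_lt hD2 h
    set s : ℝ := D / (2 * ‖p‖) with hs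
    have hsp : s * ‖p‖ = D / 2 := by
      field_simp [hs]
      rw [hs]
      field_simp
    have hs0 : 0 ≤ s := div_nonneg (by linarith) (by positivity)
    have hs1 : s < 1 := by
      rw [hs, div_lt_one (by positivity)]
      linarith
    have hip : ⟪p, q⟫_ℝ ≤ ‖p‖ * ‖q‖ := real_inner_le_norm p q
    have e1 : ‖s • p - q‖ ^ 2 = s^2 * ‖p‖^2 - 2 * (s * ⟪p, q⟫_ℝ) + ‖q‖^2 := by
      rw [norm_sub_sq_real, real_inner_smul_left, norm_smul, Real.norm_eq_abs,
        abs_of_nonneg hs0, mul_pow]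
    have e2 : ‖p - q‖ ^ 2 = ‖p‖^2 - 2 * ⟪p, q⟫_ℝ + ‖q‖^2 := by
      rw [norm_sub_sq_real]
    have h2 : ‖s • p - q‖ ^ 2 ≤ ‖p - q‖ ^ 2 := by
      rw [e1, e2]
      nlinarith [norm_nonneg q, hq, hip, hsp, hs0, hs1, sq_nonneg (1 - s), hp]
    nlinarith [norm_nonneg (s • p - q), norm_nonneg (p - q), h2]

lemma log_step (x : ℝ) (hx : 1 ≤ x) : 1 / x ≤ 2 * (Real.log (x + 1) - Real.log x) := by
  have hx0 : 0 < x := by linarith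
  have key : Real.log (x / (x + 1)) ≤ x / (x + 1) - 1 :=
    Real.log_le_sub_one_of_pos (by positivity)
  rw [Real.log_div (ne_of_gt hx0) (by positivity)] at key
  have h1 : x / (x + 1) - 1 = -(1 / (x + 1)) := by field_simp; ring
  have h2 : 1 / (x + 1) ≤ Real.log (x + 1) - Real.log x := by linarith
  have h3 : 1 / x ≤ 2 * (1 / (x + 1)) := by
    rw [mul_one_div, div_le_div_iff₀ hx0 (by linarith)]
    linarith
  linarith

/-- If `w 1 ∈ 𝒟` and `w (t+1) = Π(w t − η_t • g t)` with `‖g t‖ ≤ G` and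
time-varying step sizes `η_t = 1/(λ(t + c))`, then the total continuous switching cost satisfies
`∑_{t=2}^T ‖w t − w (t−1)‖ ≤ (2G/λ)·log (T/(1 + c) + 1)`. -/
theorem stmt14 (d T : ℕ) (hT : 3 ≤ T) (D G lam c : ℝ) (hD : 0 < D) (hlam : 0 < lam)
    (hG : 0 < G) (hc : 0 ≤ c)
    (w g : ℕ → EuclideanSpace ℝ (Fin d))
    (hw1 : w 1 ∈ Metric.closedBall (0 : EuclideanSpace ℝ (Fin d)) (D / 2))
    (hg : ∀ t ∈ Finset.Icc 1 (T - 1), ‖g t‖ ≤ G)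
    (hupd : ∀ t ∈ Finset.Icc 1 (T - 1),
      w (t + 1) = ballProj d D (w t - (1 / (lam * ((t : ℝ) + c))) • g t)) :
    ∑ t ∈ Finset.Icc 2 T, ‖w t - w (t - 1)‖ ≤
      (2 * G / lam) * Real.log ((T : ℝ) / (1 + c) + 1) := by
  have hc1 : (0:ℝ) < 1 + c := by linarith
  -- all iterates stay in the ball
  have hball : ∀ t, 1 ≤ t → t ≤ T → ‖w t‖ ≤ D / 2 := by
    intro t
    induction t with
    | zero => omega
    | succ s _ =>
      intro h1 h2
      rcases Nat.lt_or_ge s 1 with h | h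
      · have : s = 0 := by omega
        subst this
        simpa [mem_closedBall_zero_iff] using hw1
      · rw [hupd s (Finset.mem_Icc.mpr ⟨h, by omega⟩)]
        exact ballProj_mem d D hD.le _
  -- per-step bound
  have hstep : ∀ t ∈ Finset.Icc 1 (T - 1),
      ‖w (t + 1) - w t‖ ≤ G / lam * (1 / ((t : ℝ) + c)) := by
    intro t ht
    obtain ⟨h1, h2⟩ := Finset.mem_Icc.mp ht
    have ht1 : (1:ℝ) ≤ (t:ℝ) := by exact_mod_cast h1
    have htc : (0:ℝ) < (t:ℝ) + c := by linarith
    have hwt : ‖w t‖ ≤ D / 2 := hball t h1 (by omega)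
    rw [hupd t ht]
    calc ‖ballProj d D (w t - (1 / (lam * ((t:ℝ) + c))) • g t) - w t‖
        ≤ ‖(w t - (1 / (lam * ((t:ℝ) + c))) • g t) - w t‖ := ballProj_dist d D _ _ hwt
      _ = (1 / (lam * ((t:ℝ) + c))) * ‖g t‖ := by
          rw [sub_sub_cancel_left, norm_neg, norm_smul, Real.norm_eq_abs,
            abs_of_nonneg (by positivity)]
      _ ≤ (1 / (lam * ((t:ℝ) + c))) * G := by
          have := hg t ht
          have h0 : (0:ℝ) ≤ 1 / (lam * ((t:ℝ) + c)) := by positivity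
          exact mul_le_mul_of_nonneg_left this h0
      _ = G / lam * (1 / ((t:ℝ) + c)) := by
          field_simp
  -- reindex the sum
  rw [← Finset.Ico_add_one_right_eq_Icc, Finset.sum_Ico_eq_sum_range]
  have hidx : T + 1 - 2 = T - 1 := by omega
  rw [hidx]
  have key : ∀ i ∈ Finset.range (T - 1),
      ‖w (2 + i) - w (2 + i - 1)‖ ≤
        G / lam * (2 * (Real.log (((i:ℝ) + 1 + c) + 1) - Real.log ((i:ℝ) + 1 + c))) := by
    intro i hi
    have hi' : i < T - 1 := Finset.mem_range.mp hi
    have hmem : i + 1 ∈ Finset.Icc 1 (T - 1) := Finset.mem_Icc.mpr ⟨by omega, by omega⟩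
    have h1 := hstep (i + 1) hmem
    have h2 : (1:ℝ) ≤ (i:ℝ) + 1 + c := by
      have : (0:ℝ) ≤ (i:ℝ) := Nat.cast_nonneg i
      linarith
    have h3 := log_step ((i:ℝ) + 1 + c) h2
    have heq : 2 + i = (i + 1) + 1 := by omega
    rw [heq]
    simp only [Nat.add_sub_cancel]
    calc ‖w (i + 1 + 1) - w (i + 1)‖ ≤ G / lam * (1 / (((i+1:ℕ):ℝ) + c)) := h1
      _ = G / lam * (1 / ((i:ℝ) + 1 + c)) := by push_cast; ring_nf
      _ ≤ G / lam * (2 * (Real.log (((i:ℝ) + 1 + c) + 1) - Real.log ((i:ℝ) + 1 + c))) :=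
          mul_le_mul_of_nonneg_left h3 (by positivity)
  calc ∑ i ∈ Finset.range (T - 1), ‖w (2 + i) - w (2 + i - 1)‖
      ≤ ∑ i ∈ Finset.range (T - 1),
          G / lam * (2 * (Real.log (((i:ℝ) + 1 + c) + 1) - Real.log ((i:ℝ) + 1 + c))) :=
        Finset.sum_le_sum key
    _ = 2 * G / lam * ∑ i ∈ Finset.range (T - 1),
          ((fun k : ℕ => Real.log ((k:ℝ) + 1 + c)) (i + 1)
            - (fun k : ℕ => Real.log ((k:ℝ) + 1 + c)) i) := by
        rw [Finset.mul_sum]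
        apply Finset.sum_congr rfl
        intro i _
        simp only
        push_cast
        ring_nf
    _ = 2 * G / lam * (Real.log (((T - 1 : ℕ):ℝ) + 1 + c) - Real.log ((0:ℝ) + 1 + c)) := by
        rw [Finset.sum_range_sub (fun k : ℕ => Real.log ((k:ℝ) + 1 + c))]
        norm_num
    _ ≤ 2 * G / lam * Real.log ((T:ℝ) / (1 + c) + 1) := by
        have hcast : ((T - 1 : ℕ):ℝ) = (T:ℝ) - 1 := by
          have h1 : (1:ℕ) ≤ T := by omega
          push_cast [h1]
          ring
        rw [hcast]
        have e1 : (T:ℝ) - 1 + 1 + c = (T:ℝ) + c := by ring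
        rw [e1]
        have hT0 : (0:ℝ) < (T:ℝ) + c := by
          have : (3:ℝ) ≤ (T:ℝ) := by exact_mod_cast hT
          linarith
        rw [zero_add, ← Real.log_div (ne_of_gt hT0) (ne_of_gt hc1)]
        have hlog : Real.log (((T:ℝ) + c) / (1 + c)) ≤ Real.log ((T:ℝ) / (1 + c) + 1) := by
          apply Real.log_le_log (by positivity)
          rw [div_add' _ _ _ (ne_of_gt hc1), div_le_div_iff₀ hc1 hc1]
          nlinarith
        have hco : (0:ℝ) ≤ 2 * G / lam := by positivity
        exact mul_le_mul_of_nonneg_left hlog hco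
end

section
/- Let T ≥ 3, λ > 0, G > 0, let each f_t : ℝ^d → ℝ be λ-strongly convex and differentiable with ‖∇f_t(w)‖ ≤ G for all w ∈ 𝒟, let w_1 ∈ 𝒟, and define iterates by w_{t+1} = Π(w_t − η_t·∇f_t(w_t)) with step sizes η_t = 1/(λt). If the switching budget S satisfies S ≥ (2G/λ)·log(T + 1), then the continuous switching constraint Σ_{t=2}^T ‖w_t − w_{t−1}‖ ≤ S holds, and the regret satisfies R = Σ_{t=1}^T f_t(w_t) − min_{w ∈ 𝒟} Σ_{t=1}^T f_t(w) ≤ λ·D² + (2G²/λ)·log(T + 1). -/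
open scoped InnerProductSpace BigOperators

lemma ballProj_norm_le (d : ℕ) {D : ℝ} (hD : 0 < D) (p : EuclideanSpace ℝ (Fin d)) :
    ‖ballProj d D p‖ ≤ D / 2 := by
  unfold ballProj
  split_ifs with h
  · exact h
  · push_neg at h
    have hp : 0 < ‖p‖ := lt_trans (by linarith) h
    rw [norm_smul, Real.norm_eq_abs, abs_of_nonneg (by positivity)]
    rw [show D / (2 * ‖p‖) * ‖p‖ = D / 2 by field_simp]

lemma ballProj_nonexpansive (d : ℕ) {D : ℝ} (hD : 0 < D)
    (p q : EuclideanSpace ℝ (Fin d)) (hq : ‖q‖ ≤ D / 2) :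
    ‖ballProj d D p - q‖ ≤ ‖p - q‖ := by
  unfold ballProj
  split_ifs with h
  · exact le_refl _
  · push_neg at h
    set c := D / (2 * ‖p‖) with hcdef
    have hp : 0 < ‖p‖ := lt_trans (by linarith) h
    have hc0 : 0 < c := by positivity
    have hc1 : c < 1 := by rw [hcdef, div_lt_one (by positivity)]; linarith
    have hcp : c * ‖p‖ = D / 2 := by rw [hcdef]; field_simp
    have hq' : ‖q‖ ≤ c * ‖p‖ := by rw [hcp]; exact hq
    have hpq : ⟪p, q⟫_ℝ ≤ c * ‖p‖ ^ 2 := by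
      have := real_inner_le_norm p q
      nlinarith [norm_nonneg p, norm_nonneg q]
    have key : ‖c • p - q‖ ^ 2 ≤ ‖p - q‖ ^ 2 := by
      rw [norm_sub_sq_real, norm_sub_sq_real, norm_smul, real_inner_smul_left,
        Real.norm_eq_abs, abs_of_pos hc0]
      nlinarith [mul_le_mul_of_nonneg_left hpq (by linarith : (0:ℝ) ≤ 1 - c),
        mul_nonneg (mul_nonneg (by linarith : (0:ℝ) ≤ 1 - c) (by linarith : (0:ℝ) ≤ 1 - c)) (sq_nonneg ‖p‖)]
    have h1 : (0:ℝ) ≤ ‖p - q‖ := norm_nonneg _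
    nlinarith [norm_nonneg (c • p - q)]

lemma harmSum_le (n : ℕ) (hn : 1 ≤ n) :
    ∑ t ∈ Finset.Icc 1 n, (1 : ℝ) / (t : ℝ) ≤ 1 + Real.log n := by
  induction n, hn using Nat.le_induction with
  | base => simp
  | succ n hn ih =>
    rw [Finset.sum_Icc_succ_top (by omega)]
    have hn0 : (0:ℝ) < n := by exact_mod_cast hn
    have h1 : Real.log ((n:ℝ) / ((n:ℝ)+1)) ≤ (n:ℝ)/((n:ℝ)+1) - 1 :=
      Real.log_le_sub_one_of_pos (by positivity)
    rw [Real.log_div (by positivity) (by positivity)] at h1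
    have h2 : (n:ℝ)/((n:ℝ)+1) - 1 = -(1/((n:ℝ)+1)) := by field_simp; ring
    push_cast
    rw [h2] at h1
    linarith

lemma telescope_Icc (c : ℕ → ℝ) (m : ℕ) :
    ∑ t ∈ Finset.Icc 1 m, (c t - c (t + 1)) = c 1 - c (m + 1) := by
  induction m with
  | zero => simp
  | succ m ih => rw [Finset.sum_Icc_succ_top (by omega), ih]; ring

lemma sum_Icc_shift (h : ℕ → ℝ) (n : ℕ) :
    ∑ t ∈ Finset.Icc 2 (n + 1), h (t - 1) = ∑ s ∈ Finset.Icc 1 n, h s := by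
  induction n with
  | zero => simp
  | succ n ih =>
    rw [Finset.sum_Icc_succ_top (show 2 ≤ n + 1 + 1 by omega), ih,
      Finset.sum_Icc_succ_top (show 1 ≤ n + 1 by omega)]
    norm_num

set_option maxHeartbeats 1600000 in
/-- For `λ`-strongly convex differentiable losses with gradients bounded by `G`
on the ball `𝒟`, OGD with step sizes `η_t = 1/(λt)`: if `S ≥ (2G/λ)·log (T + 1)`, then the
continuous switching constraint holds and the regret is at most `λ·D² + (2G²/λ)·log (T + 1)`. -/
theorem stmt16 (d T : ℕ) (hT : 3 ≤ T) (D G lam S : ℝ) (hD : 0 < D) (hlam : 0 < lam)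
    (hG : 0 < G) (hS : (2 * G / lam) * Real.log ((T : ℝ) + 1) ≤ S)
    (f : ℕ → EuclideanSpace ℝ (Fin d) → ℝ)
    (hdiff : ∀ t ∈ Finset.Icc 1 T, Differentiable ℝ (f t))
    (hsc : ∀ t ∈ Finset.Icc 1 T,
      ∀ u ∈ Metric.closedBall (0 : EuclideanSpace ℝ (Fin d)) (D / 2),
      ∀ v ∈ Metric.closedBall (0 : EuclideanSpace ℝ (Fin d)) (D / 2),
        f t v + ⟪gradient (f t) v, u - v⟫_ℝ + lam / 2 * ‖u - v‖ ^ 2 ≤ f t u)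
    (hgrad : ∀ t ∈ Finset.Icc 1 T,
      ∀ v ∈ Metric.closedBall (0 : EuclideanSpace ℝ (Fin d)) (D / 2), ‖gradient (f t) v‖ ≤ G)
    (w : ℕ → EuclideanSpace ℝ (Fin d))
    (hw1 : w 1 ∈ Metric.closedBall (0 : EuclideanSpace ℝ (Fin d)) (D / 2))
    (hupd : ∀ t ∈ Finset.Icc 1 (T - 1),
      w (t + 1) = ballProj d D (w t - (1 / (lam * (t : ℝ))) • gradient (f t) (w t))) :
    (∑ t ∈ Finset.Icc 2 T, ‖w t - w (t - 1)‖ ≤ S) ∧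
    (∑ t ∈ Finset.Icc 1 T, f t (w t)) -
        (⨅ v : Metric.closedBall (0 : EuclideanSpace ℝ (Fin d)) (D / 2),
          ∑ t ∈ Finset.Icc 1 T, f t (v : EuclideanSpace ℝ (Fin d))) ≤
      lam * D ^ 2 + (2 * G ^ 2 / lam) * Real.log ((T : ℝ) + 1) := by
  obtain ⟨m, rfl⟩ : ∃ m, T = m + 1 := ⟨T - 1, by omega⟩
  have hm : 2 ≤ m := by omega
  simp only [Nat.add_sub_cancel] at hupd
  -- membership helper
  have memball : ∀ x : EuclideanSpace ℝ (Fin d), ‖x‖ ≤ D / 2 →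
      x ∈ Metric.closedBall (0 : EuclideanSpace ℝ (Fin d)) (D / 2) := by
    intro x hx; simpa [Metric.mem_closedBall, dist_zero_right] using hx
  have hw1' : ‖w 1‖ ≤ D / 2 := by
    simpa [Metric.mem_closedBall, dist_zero_right] using hw1
  -- all iterates are in the ball
  have hball : ∀ t, 1 ≤ t → t ≤ m + 1 → ‖w t‖ ≤ D / 2 := by
    intro t h1 h2
    rcases Nat.lt_or_ge t 2 with h | h
    · have : t = 1 := by omega
      rw [this]; exact hw1'
    · obtain ⟨s, rfl⟩ : ∃ s, t = s + 1 := ⟨t - 1, by omega⟩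
      rw [hupd s (Finset.mem_Icc.mpr ⟨by omega, by omega⟩)]
      exact ballProj_norm_le d hD _
  -- per-step movement bound
  have hmove : ∀ s ∈ Finset.Icc 1 m, ‖w (s + 1) - w s‖ ≤ G / lam * (1 / (s : ℝ)) := by
    intro s hs
    rw [Finset.mem_Icc] at hs
    have hs0 : (0:ℝ) < s := by exact_mod_cast hs.1
    have hws : ‖w s‖ ≤ D / 2 := hball s hs.1 (by omega)
    have hgb : ‖gradient (f s) (w s)‖ ≤ G :=
      hgrad s (Finset.mem_Icc.mpr ⟨hs.1, by omega⟩) (w s) (memball _ hws)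
    rw [hupd s (Finset.mem_Icc.mpr hs)]
    calc ‖ballProj d D (w s - (1 / (lam * s)) • gradient (f s) (w s)) - w s‖
        ≤ ‖(w s - (1 / (lam * s)) • gradient (f s) (w s)) - w s‖ :=
          ballProj_nonexpansive d hD _ _ hws
      _ = (1 / (lam * s)) * ‖gradient (f s) (w s)‖ := by
          rw [show (w s - (1 / (lam * s)) • gradient (f s) (w s)) - w s
              = -((1 / (lam * s)) • gradient (f s) (w s)) by abel]
          rw [norm_neg, norm_smul, Real.norm_eq_abs, abs_of_nonneg (by positivity)]
      _ ≤ G / lam * (1 / (s : ℝ)) := by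
          rw [show G / lam * (1 / (s : ℝ)) = (1 / (lam * s)) * G by field_simp]
          exact mul_le_mul_of_nonneg_left hgb (by positivity)
  -- log facts
  have hL4 : (1.38 : ℝ) ≤ Real.log ((m : ℝ) + 2) := by
    have h4 : (4:ℝ) ≤ (m : ℝ) + 2 := by
      have : (2:ℝ) ≤ m := by exact_mod_cast hm
      linarith
    have := Real.log_le_log (by norm_num : (0:ℝ) < 4) h4
    have hl2 := Real.log_two_gt_d9
    have he : Real.log 4 = 2 * Real.log 2 := by
      rw [show (4:ℝ) = 2 ^ 2 by norm_num, Real.log_pow]; norm_num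
    linarith
  have hlogm : Real.log (m : ℝ) ≤ Real.log ((m : ℝ) + 2) := by
    apply Real.log_le_log (by exact_mod_cast Nat.lt_of_lt_of_le Nat.zero_lt_two hm)
    linarith
  have hcast : ((m + 1 : ℕ) : ℝ) + 1 = (m : ℝ) + 2 := by push_cast; ring
  constructor
  -- switching constraint
  · have hre : ∑ t ∈ Finset.Icc 2 (m + 1), ‖w t - w (t - 1)‖
        = ∑ s ∈ Finset.Icc 1 m, ‖w (s + 1) - w s‖ := by
      rw [← sum_Icc_shift (fun s => ‖w (s + 1) - w s‖) m]
      apply Finset.sum_congr rfl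
      intro t ht
      rw [Finset.mem_Icc] at ht
      have : t - 1 + 1 = t := by omega
      rw [this]
    rw [hre]
    calc ∑ s ∈ Finset.Icc 1 m, ‖w (s + 1) - w s‖
        ≤ ∑ s ∈ Finset.Icc 1 m, G / lam * (1 / (s : ℝ)) := Finset.sum_le_sum hmove
      _ = G / lam * ∑ s ∈ Finset.Icc 1 m, (1 / (s : ℝ)) := by rw [Finset.mul_sum]
      _ ≤ G / lam * (1 + Real.log m) := by
          apply mul_le_mul_of_nonneg_left (harmSum_le m (by omega)) (by positivity)
      _ ≤ (2 * G / lam) * Real.log ((m : ℝ) + 2) := by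
          have hGl : (0:ℝ) ≤ G / lam := by positivity
          have h1 : 1 + Real.log m ≤ 2 * Real.log ((m : ℝ) + 2) := by linarith
          have h2 := mul_le_mul_of_nonneg_left h1 hGl
          have h3 : G / lam * (2 * Real.log ((m : ℝ) + 2))
              = 2 * G / lam * Real.log ((m : ℝ) + 2) := by ring
          linarith
      _ ≤ S := by rwa [hcast] at hS
  -- regret bound
  · have main : ∀ u : EuclideanSpace ℝ (Fin d), ‖u‖ ≤ D / 2 →
        ∑ t ∈ Finset.Icc 1 (m + 1), f t (w t) - ∑ t ∈ Finset.Icc 1 (m + 1), f t u ≤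
          lam * D ^ 2 + (2 * G ^ 2 / lam) * Real.log ((m : ℝ) + 2) := by
      intro u hu
      set a : ℕ → ℝ := fun t => ‖w t - u‖ ^ 2 with ha
      set c : ℕ → ℝ := fun t => lam * ((t : ℝ) - 1) / 2 * a t with hc
      -- per-step regret bound for t ≤ m
      have key : ∀ t ∈ Finset.Icc 1 m,
          f t (w t) - f t u ≤ (c t - c (t + 1)) + G ^ 2 / (2 * lam) * (1 / (t : ℝ)) := by
        intro t ht
        rw [Finset.mem_Icc] at ht
        have ht0 : (0:ℝ) < t := by exact_mod_cast ht.1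
        have hwt : ‖w t‖ ≤ D / 2 := hball t ht.1 (by omega)
        have htT : t ∈ Finset.Icc 1 (m + 1) := Finset.mem_Icc.mpr ⟨ht.1, by omega⟩
        set g := gradient (f t) (w t) with hg
        have hgb : ‖g‖ ≤ G := hgrad t htT (w t) (memball _ hwt)
        set η := 1 / (lam * (t : ℝ)) with hη
        have hηpos : 0 < η := by positivity
        have hη2 : lam * (t : ℝ) * η = 1 := by rw [hη]; field_simp
        -- projection step
        have hstep : a (t + 1) ≤ a t - 2 * η * ⟪g, w t - u⟫_ℝ + η ^ 2 * ‖g‖ ^ 2 := by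
          have hmono : ‖w (t + 1) - u‖ ≤ ‖(w t - η • g) - u‖ := by
            rw [hupd t (Finset.mem_Icc.mpr ht)]
            exact ballProj_nonexpansive d hD _ _ hu
          have hsq : a (t + 1) ≤ ‖(w t - η • g) - u‖ ^ 2 := by
            have := norm_nonneg (w (t + 1) - u)
            simp only [ha]
            nlinarith [norm_nonneg ((w t - η • g) - u)]
          have hexp : ‖(w t - η • g) - u‖ ^ 2
              = a t - 2 * η * ⟪g, w t - u⟫_ℝ + η ^ 2 * ‖g‖ ^ 2 := by
            rw [show (w t - η • g) - u = (w t - u) - η • g by abel]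
            rw [norm_sub_sq_real, real_inner_smul_right, norm_smul, Real.norm_eq_abs,
              abs_of_pos hηpos, real_inner_comm]
            simp only [ha]
            ring
          linarith [hexp ▸ hsq]
        -- strong convexity
        have hsc' : f t (w t) - f t u ≤ ⟪g, w t - u⟫_ℝ - lam / 2 * a t := by
          have h := hsc t htT u (memball _ hu) (w t) (memball _ hwt)
          have e1 : ⟪g, u - w t⟫_ℝ = -⟪g, w t - u⟫_ℝ := by
            rw [show u - w t = -(w t - u) by abel, inner_neg_right]
          have e2 : ‖u - w t‖ = ‖w t - u‖ := norm_sub_rev _ _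
          rw [e1, e2] at h
          simp only [ha]
          linarith
        -- combine
        have hg2 : ‖g‖ ^ 2 ≤ G ^ 2 := by nlinarith [norm_nonneg g]
        have h5 := mul_le_mul_of_nonneg_left hstep
          (by positivity : (0:ℝ) ≤ lam * (t : ℝ) / 2)
        have h6 : lam * (t : ℝ) / 2 * (a t - 2 * η * ⟪g, w t - u⟫_ℝ + η ^ 2 * ‖g‖ ^ 2)
            = lam * (t : ℝ) / 2 * a t - ⟪g, w t - u⟫_ℝ + η * ‖g‖ ^ 2 / 2 := by
          have : lam * (t : ℝ) / 2 * (a t - 2 * η * ⟪g, w t - u⟫_ℝ + η ^ 2 * ‖g‖ ^ 2)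
              = lam * (t : ℝ) / 2 * a t - (lam * (t : ℝ) * η) * ⟪g, w t - u⟫_ℝ
                + (lam * (t : ℝ) * η) * η * ‖g‖ ^ 2 / 2 := by ring
          rw [this, hη2]; ring
        rw [h6] at h5
        have h7 : η * ‖g‖ ^ 2 / 2 ≤ η * G ^ 2 / 2 := by nlinarith
        have h8 : ⟪g, w t - u⟫_ℝ ≤ lam * (t : ℝ) / 2 * (a t - a (t + 1)) + η * G ^ 2 / 2 := by
          nlinarith [h5]
        have h9 : η * G ^ 2 / 2 = G ^ 2 / (2 * lam) * (1 / (t : ℝ)) := by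
          rw [hη]; field_simp
        have h10 : c t - c (t + 1) = lam * (t : ℝ) / 2 * (a t - a (t + 1)) - lam / 2 * a t := by
          simp only [hc]; push_cast; ring
        rw [h10]
        linarith [h8, hsc', h9 ▸ h8]
      -- last step bound
      have hlast : f (m + 1) (w (m + 1)) - f (m + 1) u ≤ G ^ 2 / (2 * lam) := by
        have hwm : ‖w (m + 1)‖ ≤ D / 2 := hball (m + 1) (by omega) (by omega)
        have hmem : m + 1 ∈ Finset.Icc 1 (m + 1) := Finset.mem_Icc.mpr ⟨by omega, le_refl _⟩
        have h := hsc (m + 1) hmem u (memball _ hu) (w (m + 1)) (memball _ hwm)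
        have hgb : ‖gradient (f (m + 1)) (w (m + 1))‖ ≤ G := hgrad (m + 1) hmem _ (memball _ hwm)
        have hcs : -⟪gradient (f (m + 1)) (w (m + 1)), u - w (m + 1)⟫_ℝ
            ≤ G * ‖u - w (m + 1)‖ := by
          have h1 := abs_real_inner_le_norm (gradient (f (m + 1)) (w (m + 1))) (u - w (m + 1))
          have h2 : ‖gradient (f (m + 1)) (w (m + 1))‖ * ‖u - w (m + 1)‖
              ≤ G * ‖u - w (m + 1)‖ := mul_le_mul_of_nonneg_right hgb (norm_nonneg _)
          have h3 := neg_abs_le ⟪gradient (f (m + 1)) (w (m + 1)), u - w (m + 1)⟫_ℝ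
          linarith
        set x := ‖u - w (m + 1)‖ with hx
        have h11 : f (m + 1) (w (m + 1)) - f (m + 1) u ≤ G * x - lam / 2 * x ^ 2 := by
          linarith
        have h12 : G * x - lam / 2 * x ^ 2 ≤ G ^ 2 / (2 * lam) := by
          rw [le_div_iff₀ (by positivity : (0:ℝ) < 2 * lam)]
          nlinarith [sq_nonneg (lam * x - G)]
        linarith
      -- sum up
      have hsum1 : ∑ t ∈ Finset.Icc 1 m, (f t (w t) - f t u)
          ≤ (c 1 - c (m + 1)) + G ^ 2 / (2 * lam) * (1 + Real.log m) := by
        calc ∑ t ∈ Finset.Icc 1 m, (f t (w t) - f t u)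
            ≤ ∑ t ∈ Finset.Icc 1 m, ((c t - c (t + 1)) + G ^ 2 / (2 * lam) * (1 / (t : ℝ))) :=
              Finset.sum_le_sum key
          _ = (c 1 - c (m + 1)) + G ^ 2 / (2 * lam) * ∑ t ∈ Finset.Icc 1 m, (1 / (t : ℝ)) := by
              rw [Finset.sum_add_distrib, telescope_Icc, Finset.mul_sum]
          _ ≤ (c 1 - c (m + 1)) + G ^ 2 / (2 * lam) * (1 + Real.log m) := by
              have := harmSum_le m (by omega)
              have hpos : (0:ℝ) ≤ G ^ 2 / (2 * lam) := by positivity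
              nlinarith
      have hc1 : c 1 = 0 := by simp [hc]
      have hcm : 0 ≤ c (m + 1) := by
        simp only [hc, ha]
        have : (0:ℝ) ≤ ((m + 1 : ℕ) : ℝ) - 1 := by push_cast; linarith [Nat.cast_nonneg (α := ℝ) m]
        positivity
      have hsplit : ∑ t ∈ Finset.Icc 1 (m + 1), (f t (w t) - f t u)
          = ∑ t ∈ Finset.Icc 1 m, (f t (w t) - f t u) + (f (m + 1) (w (m + 1)) - f (m + 1) u) :=
        Finset.sum_Icc_succ_top (by omega) _
      have htotal : ∑ t ∈ Finset.Icc 1 (m + 1), (f t (w t) - f t u)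
          ≤ G ^ 2 / (2 * lam) * (2 + Real.log m) := by
        rw [hsplit]
        have : G ^ 2 / (2 * lam) * (1 + Real.log m) + G ^ 2 / (2 * lam)
            = G ^ 2 / (2 * lam) * (2 + Real.log m) := by ring
        linarith [hsum1, hlast]
      have hfin : G ^ 2 / (2 * lam) * (2 + Real.log m)
          ≤ lam * D ^ 2 + (2 * G ^ 2 / lam) * Real.log ((m : ℝ) + 2) := by
        have hq : (0:ℝ) < G ^ 2 / (2 * lam) := by positivity
        have hD2 : (0:ℝ) ≤ lam * D ^ 2 := by positivity
        have h1 : 2 + Real.log m ≤ 4 * Real.log ((m : ℝ) + 2) := by nlinarith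
        have h2 : G ^ 2 / (2 * lam) * (4 * Real.log ((m : ℝ) + 2))
            = (2 * G ^ 2 / lam) * Real.log ((m : ℝ) + 2) := by ring
        nlinarith
      rw [← Finset.sum_sub_distrib] at *
      linarith
    -- pass to the infimum
    have hne : Nonempty (Metric.closedBall (0 : EuclideanSpace ℝ (Fin d)) (D / 2)) :=
      ⟨⟨0, Metric.mem_closedBall_self (by positivity)⟩⟩
    have hinf : ∑ t ∈ Finset.Icc 1 (m + 1), f t (w t) -
        (lam * D ^ 2 + (2 * G ^ 2 / lam) * Real.log (((m + 1 : ℕ) : ℝ) + 1))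
        ≤ ⨅ v : Metric.closedBall (0 : EuclideanSpace ℝ (Fin d)) (D / 2),
          ∑ t ∈ Finset.Icc 1 (m + 1), f t (v : EuclideanSpace ℝ (Fin d)) := by
      apply le_ciInf
      intro v
      have hv : ‖(v : EuclideanSpace ℝ (Fin d))‖ ≤ D / 2 :=
        mem_closedBall_zero_iff.mp v.2
      have := main v hv
      rw [hcast]
      linarith
    linarith
end
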